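/- Let G be a finite simple graph with no induced cycle of length four, with vertex set partitioned into sets I and J, such that every induced path between two vertices of I with interior contained in J has length exactly two. Then for any two adjacent vertices u, v in J, either N(u) ∩ I ⊆ N(v) ∩ I or N(v) ∩ I ⊆ N(u) ∩ I. -/
import Mathlib


/-- `f` is an embedding of an induced path of length `n` (on `n+1` vertices) into `G`. -/
def IsInducedPathEmb {V : Type*} (G : SimpleGraph V) (n : ℕ) (f : Fin (n+1) → V) : Prop :=
  Function.Injective f ∧
    ∀ i j : Fin (n+1), G.Adj (f i) (f j) ↔ ((i : ℕ) + 1 = (j : ℕ) ∨ (j : ℕ) + 1 = (i : ℕ))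

/-- In a graph with no induced four-cycle, partitioned into `I`, `J`,
in which every induced path between two vertices of `I` with interior in `J` has
length exactly two, the neighborhoods in `I` of adjacent vertices of `J` are nested. -/
theorem stmt8 {V : Type*} [Fintype V] (G : SimpleGraph V)
    (hC4 : ¬ ∃ a b c d : V, a ≠ b ∧ a ≠ c ∧ a ≠ d ∧ b ≠ c ∧ b ≠ d ∧ c ≠ d ∧
      G.Adj a b ∧ G.Adj b c ∧ G.Adj c d ∧ G.Adj d a ∧ ¬G.Adj a c ∧ ¬G.Adj b d)
    (I J : Set V) (hpart : I ∪ J = Set.univ) (hdisj : Disjoint I J)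
    (hpath : ∀ (k : ℕ) (f : Fin (k+1) → V), IsInducedPathEmb G k f →
      f 0 ∈ I → f (Fin.last k) ∈ I → f 0 ≠ f (Fin.last k) →
      (∀ i : Fin (k+1), i ≠ 0 → i ≠ Fin.last k → f i ∈ J) → k = 2) :
    ∀ u ∈ J, ∀ v ∈ J, G.Adj u v →
      (G.neighborSet u ∩ I ⊆ G.neighborSet v ∩ I ∨
       G.neighborSet v ∩ I ⊆ G.neighborSet u ∩ I) := by
  intro u hu v hv huv
  by_contra hcon
  push_neg at hcon
  obtain ⟨h1, h2⟩ := hcon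
  obtain ⟨a, ⟨hau, haI⟩, haN⟩ := Set.not_subset.mp h1
  obtain ⟨b, ⟨hbv, hbI⟩, hbN⟩ := Set.not_subset.mp h2
  simp only [Set.mem_inter_iff, SimpleGraph.mem_neighborSet, not_and] at haN hbN
  have hav : ¬ G.Adj v a := fun h => haN h haI
  have hbu : ¬ G.Adj u b := fun h => hbN h hbI
  have hau : G.Adj u a := hau
  have hbv : G.Adj v b := hbv
  have haJ : a ∉ J := fun h => hdisj.ne_of_mem haI h rfl
  have hbJ : b ∉ J := fun h => hdisj.ne_of_mem hbI h rfl
  have hab : a ≠ b := by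
    rintro rfl; exact hbu hau
  have hav' : a ≠ v := fun h => haJ (h ▸ hv)
  have hau' : a ≠ u := fun h => haJ (h ▸ hu)
  have hbv' : b ≠ v := fun h => hbJ (h ▸ hv)
  have hbu' : b ≠ u := fun h => hbJ (h ▸ hu)
  have huv' : u ≠ v := huv.ne
  by_cases hAB : G.Adj a b
  · -- induced C4: a, b, v, u
    exact hC4 ⟨a, b, v, u, hab, hav', hau', hbv', hbu', (Ne.symm huv'),
      hAB, hbv.symm, huv.symm, hau, fun h => hav h.symm, fun h => hbu h.symm⟩
  · -- induced path a-u-v-b of length 3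
    have hva : ¬ G.Adj a v := fun h => hav h.symm
    have hbu2 : ¬ G.Adj b u := fun h => hbu h.symm
    have hAB2 : ¬ G.Adj b a := fun h => hAB h.symm
    set f : Fin 4 → V := ![a, u, v, b] with hf
    have hemb : IsInducedPathEmb G 3 f := by
      constructor
      · intro i j hij
        fin_cases i <;> fin_cases j <;> (try rfl) <;>
          simp [hf, hab, hab.symm, hav', hav'.symm, hau', hau'.symm,
            hbv', hbv'.symm, hbu', hbu'.symm, huv', huv'.symm] at hij
      · intro i j
        fin_cases i <;> fin_cases j <;>
          simp [hf, hau, hau.symm, huv, huv.symm, hbv, hbv.symm,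
            hav, hva, hbu, hbu2, hAB, hAB2, G.irrefl]
    have h02 : f 0 ∈ I := haI
    have h3 : f (Fin.last 3) ∈ I := hbI
    have hne : f 0 ≠ f (Fin.last 3) := by simpa [hf] using hab
    have hint : ∀ i : Fin 4, i ≠ 0 → i ≠ Fin.last 3 → f i ∈ J := by
      intro i h0 h3
      fin_cases i
      · exact absurd rfl h0
      · exact hu
      · exact hv
      · exact absurd rfl h3
    have := hpath 3 f hemb h02 h3 hne hint
    omega
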